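/- Let ℓ(θ,x,y) = exp(-θᵀxy) with θ ∈ ℝ^p, x ∈ ℝ^p, y ∈ {-1,1}. Let (x̃, ỹ) be the LDP release: x̃ = x + w with w ~ N(0, σ²I_p) independent of ỹ, and ỹ the randomized response of y with keep-probability S(ε) = 1/(1+e^{-ε}). Define the IWP loss estimator ℓ̃(θ, x̃, ỹ) = e^{-σ²‖θ‖²/2}[S̃(ε)·exp(-θᵀx̃ỹ) + (1-S̃(ε))·exp(θᵀx̃ỹ)] with S̃(ε) = 1/(1-e^{-ε}). Then E_{x̃,ỹ}[ℓ̃(θ, x̃, ỹ)] = exp(-θᵀxy) = ℓ(θ,x,y). -/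

import Mathlib

open MeasureTheory ProbabilityTheory
open scoped ENNReal NNReal

noncomputable def S (ε : ℝ) : ℝ := 1 / (1 + Real.exp (-ε))
noncomputable def Stilde (ε : ℝ) : ℝ := 1 / (1 - Real.exp (-ε))

/-- The isotropic Gaussian measure `N(0, v·I_p)` on `ℝ^p`. -/
noncomputable def gaussPi (p : ℕ) (v : ℝ) : Measure (EuclideanSpace ℝ (Fin p)) :=
  Measure.map (WithLp.toLp 2) (Measure.pi fun _ : Fin p => gaussianReal 0 v.toNNReal)

lemma pdf_shift {v : ℝ} (hv : 0 < v) (t x : ℝ) :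
    Real.exp (t * x) * gaussianPDFReal 0 v.toNNReal x
      = Real.exp (v * t ^ 2 / 2) * gaussianPDFReal (v * t) v.toNNReal x := by
  unfold gaussianPDFReal
  rw [Real.coe_toNNReal _ hv.le, mul_left_comm, mul_left_comm (Real.exp (v * t ^ 2 / 2))]
  congr 1
  rw [← Real.exp_add, ← Real.exp_add]
  congr 1
  field_simp
  ring

lemma mgf_gauss1 {v : ℝ} (hv : 0 < v) (t : ℝ) :
    Integrable (fun x => Real.exp (t * x)) (gaussianReal 0 v.toNNReal) ∧
      ∫ x, Real.exp (t * x) ∂(gaussianReal 0 v.toNNReal) = Real.exp (v * t ^ 2 / 2) := by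
  have hv' : v.toNNReal ≠ 0 := by simp [Real.toNNReal_eq_zero, not_le, hv]
  have hmeas : Measurable fun x => (gaussianPDFReal 0 v.toNNReal x).toNNReal :=
    (measurable_gaussianPDFReal 0 v.toNNReal).real_toNNReal
  have hd : gaussianReal 0 v.toNNReal
      = volume.withDensity fun x => ((gaussianPDFReal 0 v.toNNReal x).toNNReal : ℝ≥0∞) := by
    rw [gaussianReal_of_var_ne_zero 0 hv']
    rfl
  have hsmul : (fun x => (gaussianPDFReal 0 v.toNNReal x).toNNReal • Real.exp (t * x))
      = fun x => Real.exp (v * t ^ 2 / 2) * gaussianPDFReal (v * t) v.toNNReal x := by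
    funext x
    rw [NNReal.smul_def, Real.coe_toNNReal _ (gaussianPDFReal_nonneg 0 v.toNNReal x),
      smul_eq_mul, mul_comm _ (Real.exp (t * x)), pdf_shift hv]
  have hint : Integrable (fun x => Real.exp (v * t ^ 2 / 2) * gaussianPDFReal (v * t) v.toNNReal x) :=
    (integrable_gaussianPDFReal (v * t) v.toNNReal).const_mul _
  constructor
  · rw [hd, integrable_withDensity_iff_integrable_smul hmeas, hsmul]
    exact hint
  · rw [hd, integral_withDensity_eq_integral_smul hmeas, hsmul, integral_const_mul,
      integral_gaussianPDFReal_eq_one (v * t) hv', mul_one]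

lemma pi_fubini : ∀ (n : ℕ) (μ : Fin n → Measure ℝ), (∀ i, IsProbabilityMeasure (μ i)) →
    ∀ (f : Fin n → ℝ → ℝ), (∀ i, Integrable (f i) (μ i)) →
    Integrable (fun x : Fin n → ℝ => ∏ i, f i (x i)) (Measure.pi μ) ∧
      ∫ x : Fin n → ℝ, ∏ i, f i (x i) ∂(Measure.pi μ) = ∏ i, ∫ x, f i x ∂(μ i) := by
  intro n
  induction n with
  | zero =>
      intro μ hμ f hf
      constructor
      · simpa using integrable_const (μ := Measure.pi μ) (1 : ℝ)
      · haveI : IsProbabilityMeasure (Measure.pi μ) := MeasureTheory.Measure.pi.instIsProbabilityMeasure μ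
        simp
  | succ n ih =>
      intro μ hμ f hf
      haveI := fun i => hμ i
      have hmp := measurePreserving_piFinSuccAbove μ 0
      set e := MeasurableEquiv.piFinSuccAbove (fun _ : Fin (n+1) => ℝ) 0 with he
      have hrest := ih (fun j => μ (Fin.succAbove 0 j)) (fun j => hμ _)
        (fun j => f (Fin.succAbove 0 j)) (fun j => hf _)
      have hg : Integrable (fun y : ℝ × (Fin n → ℝ) => f 0 y.1 * ∏ j, f (Fin.succAbove 0 j) (y.2 j))
          ((μ 0).prod (Measure.pi fun j => μ (Fin.succAbove 0 j))) :=
        Integrable.mul_prod (hf 0) hrest.1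
      have hcomp : ∀ x : Fin (n+1) → ℝ,
          f 0 (e x).1 * ∏ j, f (Fin.succAbove 0 j) ((e x).2 j) = ∏ i, f i (x i) := by
        intro x
        simp only [he, MeasurableEquiv.piFinSuccAbove_apply]
        rw [Fin.prod_univ_succAbove (fun i => f i (x i)) 0]
        rfl
      have hic := (hmp.integrable_comp_emb e.measurableEmbedding).mpr hg
      have hval := hmp.integral_comp e.measurableEmbedding
        (fun y : ℝ × (Fin n → ℝ) => f 0 y.1 * ∏ j, f (Fin.succAbove 0 j) (y.2 j))
      constructor
      · exact hic.congr (Filter.Eventually.of_forall fun x => hcomp x)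
      · have h2 : (fun x : Fin (n+1) → ℝ => ∏ i, f i (x i))
            = fun x => f 0 (e x).1 * ∏ j, f (Fin.succAbove 0 j) ((e x).2 j) :=
          funext fun x => (hcomp x).symm
        rw [h2]
        rw [show ∫ x : Fin (n+1) → ℝ, f 0 (e x).1 * ∏ j, f (Fin.succAbove 0 j) ((e x).2 j)
            ∂(Measure.pi μ)
          = ∫ y, f 0 y.1 * ∏ j, f (Fin.succAbove 0 j) (y.2 j)
            ∂((μ 0).prod (Measure.pi fun j => μ (Fin.succAbove 0 j))) from hval]
        rw [integral_prod_mul (μ := μ 0) (f := f 0)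
          (g := fun z : Fin n → ℝ => ∏ j, f (Fin.succAbove 0 j) (z j)), hrest.2,
          Fin.prod_univ_succAbove (fun i => ∫ x, f i x ∂ μ i) 0]

lemma mgf_gaussPi (p : ℕ) {v : ℝ} (hv : 0 < v) (θ : EuclideanSpace ℝ (Fin p)) (c : ℝ) :
    Integrable (fun w : EuclideanSpace ℝ (Fin p) => Real.exp (c * (inner ℝ θ w : ℝ))) (gaussPi p v) ∧
      ∫ w, Real.exp (c * (inner ℝ θ w : ℝ)) ∂(gaussPi p v)
        = Real.exp (v * c ^ 2 * ‖θ‖ ^ 2 / 2) := by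
  have hfub := pi_fubini p (fun _ => gaussianReal 0 v.toNNReal) (fun _ => inferInstance)
    (fun i x => Real.exp (c * θ i * x)) (fun i => (mgf_gauss1 hv (c * θ i)).1)
  have hinner : ∀ w : EuclideanSpace ℝ (Fin p),
      Real.exp (c * (inner ℝ θ w : ℝ)) = ∏ i, Real.exp (c * θ i * w i) := by
    intro w
    rw [PiLp.inner_apply]
    simp only [RCLike.inner_apply, starRingEnd_apply, star_trivial]
    rw [Finset.mul_sum, Real.exp_sum]
    exact Finset.prod_congr rfl fun i _ => by rw [mul_assoc, mul_comm (w.ofLp i)]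
  have hnorm : ∑ i, θ i ^ 2 = ‖θ‖ ^ 2 := by
    rw [← real_inner_self_eq_norm_sq, PiLp.inner_apply]
    simp only [RCLike.inner_apply, starRingEnd_apply, star_trivial, sq]
  constructor
  · show Integrable _ (Measure.map (MeasurableEquiv.toLp 2 (Fin p → ℝ)) _)
    rw [integrable_map_equiv]
    exact hfub.1.congr (Filter.Eventually.of_forall fun w => (hinner (WithLp.toLp 2 w)).symm)
  · rw [show (∫ w, Real.exp (c * (inner ℝ θ w : ℝ)) ∂(gaussPi p v))
        = ∫ w : Fin p → ℝ, ∏ i, Real.exp (c * θ i * w i)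
          ∂(Measure.pi fun _ : Fin p => gaussianReal 0 v.toNNReal) from
      by
        show ∫ w, _ ∂(Measure.map (MeasurableEquiv.toLp 2 (Fin p → ℝ)) _) = _
        rw [integral_map_equiv]
        exact integral_congr_ae (Filter.Eventually.of_forall fun w => hinner (WithLp.toLp 2 w))]
    rw [hfub.2]
    have : ∀ i : Fin p, (∫ x, Real.exp (c * θ i * x) ∂(gaussianReal 0 v.toNNReal))
        = Real.exp ((v * c ^ 2 / 2) * θ i ^ 2) := by
      intro i
      rw [(mgf_gauss1 hv (c * θ i)).2]
      congr 1
      ring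
    rw [Finset.prod_congr rfl fun i _ => this i, ← Real.exp_sum, ← Finset.mul_sum, hnorm]
    congr 1
    ring

/-- The IWP loss estimator for the exponential loss:
`ℓ̃(θ, x̃, ỹ) = e^{-σ²‖θ‖²/2}[S̃(ε) exp(-θᵀx̃ỹ) + (1-S̃(ε)) exp(θᵀx̃ỹ)]`. -/
noncomputable def iwpExp (p : ℕ) (σ ε : ℝ) (θ xt : EuclideanSpace ℝ (Fin p))
    (yt : ℝ) : ℝ :=
  Real.exp (-(σ ^ 2) * ‖θ‖ ^ 2 / 2) *
    (Stilde ε * Real.exp (-(inner ℝ θ xt : ℝ) * yt)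
      + (1 - Stilde ε) * Real.exp ((inner ℝ θ xt : ℝ) * yt))

/-- the IWP loss estimator of the exponential loss is unbiased:
taking the expectation over the Gaussian mechanism `x̃ = x + w`,
`w ~ N(0, σ²I_p)`, and the independent randomized response `ỹ` of `y` with
keep-probability `S(ε)`, we get `E[ℓ̃(θ, x̃, ỹ)] = exp(-θᵀxy)`. -/
lemma key_int (p : ℕ) (σ ε : ℝ) (hσ : 0 < σ) (θ x : EuclideanSpace ℝ (Fin p))
    (yt : ℝ) (hyt : yt ^ 2 = 1) :
    ∫ w, iwpExp p σ ε θ (x + w) yt ∂(gaussPi p (σ ^ 2))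
      = Stilde ε * Real.exp (-(inner ℝ θ x : ℝ) * yt)
        + (1 - Stilde ε) * Real.exp ((inner ℝ θ x : ℝ) * yt) := by
  have hv : (0 : ℝ) < σ ^ 2 := by positivity
  set a : ℝ := (inner ℝ θ x : ℝ) with ha
  have hIa := mgf_gaussPi p hv θ (-yt)
  have hIb := mgf_gaussPi p hv θ yt
  have hexp : ∀ w : EuclideanSpace ℝ (Fin p), iwpExp p σ ε θ (x + w) yt =
      (Real.exp (-(σ ^ 2) * ‖θ‖ ^ 2 / 2) * (Stilde ε * Real.exp (-a * yt)))
        * Real.exp ((-yt) * (inner ℝ θ w : ℝ))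
      + (Real.exp (-(σ ^ 2) * ‖θ‖ ^ 2 / 2) * ((1 - Stilde ε) * Real.exp (a * yt)))
        * Real.exp (yt * (inner ℝ θ w : ℝ)) := by
    intro w
    unfold iwpExp
    rw [inner_add_right, ← ha]
    have e1 : Real.exp (-(a + (inner ℝ θ w : ℝ)) * yt)
        = Real.exp (-a * yt) * Real.exp ((-yt) * (inner ℝ θ w : ℝ)) := by
      rw [← Real.exp_add]; congr 1; ring
    have e2 : Real.exp ((a + (inner ℝ θ w : ℝ)) * yt)
        = Real.exp (a * yt) * Real.exp (yt * (inner ℝ θ w : ℝ)) := by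
      rw [← Real.exp_add]; congr 1; ring
    rw [e1, e2]; ring
  rw [integral_congr_ae (Filter.Eventually.of_forall hexp)]
  rw [integral_add (hIa.1.const_mul _) (hIb.1.const_mul _), integral_const_mul, integral_const_mul,
    hIa.2, hIb.2, neg_sq, hyt]
  have hK : Real.exp (-(σ ^ 2) * ‖θ‖ ^ 2 / 2) * Real.exp (σ ^ 2 * 1 * ‖θ‖ ^ 2 / 2) = 1 := by
    have h0 : -(σ ^ 2) * ‖θ‖ ^ 2 / 2 + σ ^ 2 * 1 * ‖θ‖ ^ 2 / 2 = 0 := by ring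
    rw [← Real.exp_add, h0, Real.exp_zero]
  linear_combination (Stilde ε * Real.exp (-a * yt) + (1 - Stilde ε) * Real.exp (a * yt)) * hK

theorem iwp_exp_unbiased (p : ℕ) (σ ε : ℝ) (hσ : 0 < σ) (hε : 0 < ε)
    (θ x : EuclideanSpace ℝ (Fin p)) (y : ℝ) (hy : y = 1 ∨ y = -1) :
    S ε * (∫ w, iwpExp p σ ε θ (x + w) y ∂(gaussPi p (σ ^ 2)))
      + (1 - S ε) * (∫ w, iwpExp p σ ε θ (x + w) (-y) ∂(gaussPi p (σ ^ 2)))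
      = Real.exp (-(inner ℝ θ x : ℝ) * y) := by
  have hy2 : y ^ 2 = 1 := by rcases hy with h | h <;> rw [h] <;> norm_num
  have hy2' : (-y) ^ 2 = 1 := by rw [neg_sq]; exact hy2
  rw [key_int p σ ε hσ θ x y hy2, key_int p σ ε hσ θ x (-y) hy2']
  set a : ℝ := (inner ℝ θ x : ℝ)
  have h1 : -a * -y = a * y := by ring
  have h2 : a * -y = -a * y := by ring
  rw [h1, h2]
  have hq1 : (0 : ℝ) < Real.exp (-ε) := Real.exp_pos _
  have hq2 : Real.exp (-ε) < 1 := by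
    rw [Real.exp_lt_one_iff]; linarith
  unfold S Stilde
  have h1q : 1 + Real.exp (-ε) ≠ 0 := by positivity
  have h2q : 1 - Real.exp (-ε) ≠ 0 := by
    intro h; nlinarith
  field_simp
  ring
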